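/- Let H be a connected graph with girth at least 7 whose square G = H² is not complete, and let F be the subgraph of G formed by the forced edges. Then for every maximal clique Q of G, the induced subgraph F[Q ∩ V(F)] is a star (i.e., a graph with at least two vertices having a vertex adjacent to all others, the rest pairwise non-adjacent). -/

import Mathlib

open SimpleGraph

variable {V : Type*}

/-- The square of a graph: `x` and `y` are adjacent iff `1 ≤ d_H(x,y) ≤ 2`. -/
def graphSq (H : SimpleGraph V) : SimpleGraph V where
  Adj x y := x ≠ y ∧ (H.Adj x y ∨ ∃ z, H.Adj x z ∧ H.Adj z y)
  symm := by
    constructor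
    rintro x y ⟨hxy, h | ⟨z, h1, h2⟩⟩
    · exact ⟨hxy.symm, Or.inl h.symm⟩
    · exact ⟨hxy.symm, Or.inr ⟨z, h2.symm, h1.symm⟩⟩
  loopless := ⟨fun x h => h.1 rfl⟩

/-- `Q` is a maximal clique of `G`. -/
def IsMaxClique (G : SimpleGraph V) (Q : Set V) : Prop :=
  G.IsClique Q ∧ ∀ R : Set V, G.IsClique R → Q ⊆ R → R = Q

/-- `xy` is a forced edge of `G`: it lies in at least two distinct maximal cliques. -/
def Forced (G : SimpleGraph V) (x y : V) : Prop :=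
  G.Adj x y ∧ ∃ Q₁ Q₂ : Set V, Q₁ ≠ Q₂ ∧ IsMaxClique G Q₁ ∧ IsMaxClique G Q₂ ∧
    x ∈ Q₁ ∧ y ∈ Q₁ ∧ x ∈ Q₂ ∧ y ∈ Q₂

/-- The subgraph of `G` consisting of all forced edges. -/
def forcedSubgraph (G : SimpleGraph V) : SimpleGraph V where
  Adj := Forced G
  symm := by
    constructor
    rintro x y ⟨hadj, Q₁, Q₂, hne, h1, h2, hx1, hy1, hx2, hy2⟩
    exact ⟨hadj.symm, Q₁, Q₂, hne, h1, h2, hy1, hx1, hy2, hx2⟩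
  loopless := ⟨fun x h => h.1.ne rfl⟩

/-- `H` contains no cycle of length 3 and no cycle of length 5. -/
def C3C5Free (H : SimpleGraph V) : Prop :=
  ∀ (v : V) (w : H.Walk v v), w.IsCycle → w.length ≠ 3 ∧ w.length ≠ 5

/-- The set `S` induces a star in `F`: at least two vertices, a center adjacent to
all others, and the non-center vertices pairwise non-adjacent. -/
def IsStarOn (F : SimpleGraph V) (S : Set V) : Prop :=
  S.Nontrivial ∧ ∃ c ∈ S, (∀ x ∈ S, x ≠ c → F.Adj c x) ∧
    ∀ x ∈ S, ∀ y ∈ S, x ≠ c → y ≠ c → x ≠ y → ¬ F.Adj x y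

section Aux

variable {H : SimpleGraph V}

lemma cycle_len_ge (hg : 7 ≤ H.girth) {a : V} (w : H.Walk a a) (hw : w.IsCycle) :
    7 ≤ w.length := by
  have h1 : H.egirth ≤ w.length := le_egirth.mp le_rfl a w hw
  have h2 := ENat.toNat_le_toNat h1 (by simp)
  simpa [girth, ENat.toNat_coe] using hg.trans h2

lemma no_triangle (hg : 7 ≤ H.girth) {a b c : V} (hab : H.Adj a b) (hbc : H.Adj b c)
    (hca : H.Adj c a) : False := by
  have hcyc : (Walk.cons hab (Walk.cons hbc (Walk.cons hca Walk.nil))).IsCycle := by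
    simp [Walk.isCycle_def, Walk.isTrail_def, List.Nodup, hab.ne, hbc.ne, hca.ne, hab.ne',
      hbc.ne', hca.ne', Sym2.eq, Sym2.rel_iff']
  have := cycle_len_ge hg _ hcyc
  simp at this

lemma no_c4 (hg : 7 ≤ H.girth) {a b c d : V} (hab : H.Adj a b) (hbc : H.Adj b c)
    (hcd : H.Adj c d) (hda : H.Adj d a) (hac : a ≠ c) (hbd : b ≠ d) : False := by
  have hcyc : (Walk.cons hab (Walk.cons hbc (Walk.cons hcd (Walk.cons hda Walk.nil)))).IsCycle := by
    simp [Walk.isCycle_def, Walk.isTrail_def, List.Nodup, hab.ne, hbc.ne, hcd.ne, hda.ne,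
      hab.ne', hbc.ne', hcd.ne', hda.ne', hac, hbd, hac.symm, hbd.symm, Sym2.eq, Sym2.rel_iff']
  have := cycle_len_ge hg _ hcyc
  simp at this

lemma no_c5 (hg : 7 ≤ H.girth) {a b c d e : V} (hab : H.Adj a b) (hbc : H.Adj b c)
    (hcd : H.Adj c d) (hde : H.Adj d e) (hea : H.Adj e a)
    (hac : a ≠ c) (had : a ≠ d) (hbd : b ≠ d) (hbe : b ≠ e) (hce : c ≠ e) : False := by
  have hcyc : (Walk.cons hab (Walk.cons hbc (Walk.cons hcd (Walk.cons hde
      (Walk.cons hea Walk.nil))))).IsCycle := by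
    simp [Walk.isCycle_def, Walk.isTrail_def, List.Nodup, hab.ne, hbc.ne, hcd.ne, hde.ne, hea.ne,
      hab.ne', hbc.ne', hcd.ne', hde.ne', hea.ne', hac, had, hbd, hbe, hce,
      hac.symm, had.symm, hbd.symm, hbe.symm, hce.symm, Sym2.eq, Sym2.rel_iff']
  have := cycle_len_ge hg _ hcyc
  simp at this

lemma no_c6 (hg : 7 ≤ H.girth) {a b c d e f : V} (hab : H.Adj a b) (hbc : H.Adj b c)
    (hcd : H.Adj c d) (hde : H.Adj d e) (hef : H.Adj e f) (hfa : H.Adj f a)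
    (hac : a ≠ c) (had : a ≠ d) (hae : a ≠ e) (hbd : b ≠ d) (hbe : b ≠ e) (hbf : b ≠ f)
    (hce : c ≠ e) (hcf : c ≠ f) (hdf : d ≠ f) : False := by
  have hcyc : (Walk.cons hab (Walk.cons hbc (Walk.cons hcd (Walk.cons hde
      (Walk.cons hef (Walk.cons hfa Walk.nil)))))).IsCycle := by
    simp [Walk.isCycle_def, Walk.isTrail_def, List.Nodup, hab.ne, hbc.ne, hcd.ne, hde.ne, hef.ne,
      hfa.ne, hab.ne', hbc.ne', hcd.ne', hde.ne', hef.ne', hfa.ne',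
      hac, had, hae, hbd, hbe, hbf, hce, hcf, hdf,
      hac.symm, had.symm, hae.symm, hbd.symm, hbe.symm, hbf.symm, hce.symm, hcf.symm, hdf.symm,
      Sym2.eq, Sym2.rel_iff']
  have := cycle_len_ge hg _ hcyc
  simp at this

/-- The closed neighbourhood of `c` in `H`. -/
def Nb (H : SimpleGraph V) (c : V) : Set V := {x | x = c ∨ H.Adj c x}

lemma self_mem_nb (c : V) : c ∈ Nb H c := Or.inl rfl

lemma adj_mem_nb {c x : V} (h : H.Adj c x) : x ∈ Nb H c := Or.inr h

lemma nbClique (hg : 7 ≤ H.girth) (c : V) : (graphSq H).IsClique (Nb H c) := by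
  rintro x (rfl | hx) y (rfl | hy) hne
  · exact absurd rfl hne
  · exact ⟨hne, Or.inl hy⟩
  · exact ⟨hne, Or.inl hx.symm⟩
  · exact ⟨hne, Or.inr ⟨c, hx.symm, hy⟩⟩

/-- A connectivity closure principle. -/
lemma reachClosure (hconn : H.Connected) {S : Set V} (hS : ∀ z ∈ S, ∀ w, H.Adj z w → w ∈ S)
    {x : V} (hx : x ∈ S) (v : V) : v ∈ S := by
  obtain ⟨p⟩ := hconn x v
  induction p with
  | nil => exact hx
  | cons h p ih => exact ih (hS _ hx _ h)

/-- From non-completeness of the square, get two vertices at distance ≥ 3. -/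
lemma far_pair (hnc : graphSq H ≠ ⊤) : ∃ a b : V, a ≠ b ∧ ¬ (graphSq H).Adj a b := by
  by_contra h
  push_neg at h
  apply hnc
  ext a b
  simp only [top_adj]
  exact ⟨fun hh => hh.1, fun hh => h a b hh⟩

/-- Every maximal clique of the square is a closed neighbourhood. -/
lemma maxclique_eq_nb (hg : 7 ≤ H.girth) (hconn : H.Connected) (hnc : graphSq H ≠ ⊤)
    {Q : Set V} (hQ : IsMaxClique (graphSq H) Q) : ∃ c, Q = Nb H c := by
  obtain ⟨a, b, hab, hnadj⟩ := far_pair hnc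
  -- Q is nonempty
  have hQne : Q.Nonempty := by
    rcases Set.eq_empty_or_nonempty Q with rfl | h
    · have := hQ.2 {a} (by intro x hx y hy hne; simp_all) (Set.empty_subset _)
      simp at this
    · exact h
  obtain ⟨x, hx⟩ := hQne
  -- Q is nontrivial
  have hQnt : ∃ y ∈ Q, y ≠ x := by
    by_contra h
    push_neg at h
    have hne : ∃ y : V, y ≠ x := by
      rcases eq_or_ne a x with rfl | h'
      · exact ⟨b, fun hh => hab hh.symm⟩
      · exact ⟨a, h'⟩
    obtain ⟨y, hy⟩ := hne
    obtain ⟨p⟩ := hconn x y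
    cases p with
    | nil => exact hy rfl
    | cons hadj p =>
      rename_i z
      have hclique : (graphSq H).IsClique {x, z} := by
        intro u hu v hv huv
        rcases hu with rfl | rfl <;> rcases hv with rfl | rfl
        · exact absurd rfl huv
        · exact ⟨huv, Or.inl hadj⟩
        · exact ⟨huv, Or.inl hadj.symm⟩
        · exact absurd rfl huv
      have h2 := hQ.2 {x, z} hclique (fun u hu => by rw [h u hu]; exact Set.mem_insert _ _)
      have hz : z ∈ Q := by rw [← h2]; exact Set.mem_insert_of_mem _ rfl
      exact hadj.ne (h z hz).symm
  obtain ⟨y, hy, hyx⟩ := hQnt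
  have hxy : (graphSq H).Adj x y := hQ.1 hx hy (Ne.symm hyx)
  have hsub : ∃ c, Q ⊆ Nb H c := by
    rcases hxy.2 with hxy' | ⟨w, hxw, hwy⟩
    · -- Case A : x and y are H-adjacent
      have memNb : ∀ z ∈ Q, z ∈ Nb H x ∪ Nb H y := by
        intro z hz
        rcases eq_or_ne z x with rfl | hzx
        · exact Or.inl (self_mem_nb _)
        rcases eq_or_ne z y with rfl | hzy
        · exact Or.inr (self_mem_nb _)
        by_cases h1 : H.Adj x z
        · exact Or.inl (adj_mem_nb h1)
        by_cases h2 : H.Adj y z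
        · exact Or.inr (adj_mem_nb h2)
        obtain ⟨-, hA | ⟨m, hzm, hmx⟩⟩ := hQ.1 hz hx hzx
        · exact absurd hA.symm h1
        obtain ⟨-, hB | ⟨n, hzn, hny⟩⟩ := hQ.1 hz hy hzy
        · exact absurd hB.symm h2
        exfalso
        rcases eq_or_ne m n with rfl | hmn
        · exact no_triangle hg hmx hxy' hny.symm
        · -- C5 : z m x y n
          refine no_c5 hg hzm hmx hxy' hny.symm hzn.symm hzx hzy ?_ hmn ?_
          · intro hh; exact h2 (by rw [← hh]; exact hzm.symm)
          · intro hh; exact h1 (by rw [hh]; exact hzn.symm)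
      by_cases hQx : ∀ z ∈ Q, z ∈ Nb H x
      · exact ⟨x, hQx⟩
      push_neg at hQx
      obtain ⟨z, hz, hznx⟩ := hQx
      refine ⟨y, fun z' hz' => ?_⟩
      by_contra hz'ny
      have hzne_x : z ≠ x := fun h => hznx (by rw [h]; exact self_mem_nb x)
      have hnxz : ¬ H.Adj x z := fun h => hznx (adj_mem_nb h)
      have hz'ne_y : z' ≠ y := fun h => hz'ny (by rw [h]; exact self_mem_nb y)
      have hnyz' : ¬ H.Adj y z' := fun h => hz'ny (adj_mem_nb h)
      have hzy' : H.Adj y z := by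
        rcases memNb z hz with h | h
        · exact absurd h hznx
        · rcases h with h | h
          · rw [h] at hznx; exact absurd (adj_mem_nb hxy') hznx
          · exact h
      have hxz' : H.Adj x z' := by
        rcases memNb z' hz' with h | h
        · rcases h with h | h
          · rw [h] at hz'ny; exact absurd (adj_mem_nb hxy'.symm) hz'ny
          · exact h
        · exact absurd h hz'ny
      have hzz' : z ≠ z' := fun h => hznx (by rw [h]; exact adj_mem_nb hxz')
      obtain ⟨-, hC | ⟨m, hzm, hmz'⟩⟩ := hQ.1 hz hz' hzz'
      · -- C4 : z z' x y
        exact no_c4 hg hC hxz'.symm hxy' hzy' hzne_x hz'ne_y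
      · -- C5 : z m z' x y
        refine no_c5 hg hzm hmz' hxz'.symm hxy' hzy' hzz' hzne_x ?_ ?_ hz'ne_y
        · intro hh; exact hnxz (by rw [← hh]; exact hzm.symm)
        · intro hh; exact hnyz' (by rw [← hh]; exact hmz')
    · -- Case B : x and y at distance 2 via w
      have hnxy : ¬ H.Adj x y := fun h => no_triangle hg hxw hwy h.symm
      refine ⟨w, fun z hz => ?_⟩
      rcases eq_or_ne z x with rfl | hzx
      · exact adj_mem_nb hxw.symm
      rcases eq_or_ne z y with rfl | hzy
      · exact adj_mem_nb hwy
      rcases eq_or_ne z w with rfl | hzw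
      · exact self_mem_nb _
      by_cases hwz : H.Adj w z
      · exact adj_mem_nb hwz
      exfalso
      by_cases h1 : H.Adj z x <;> by_cases h2 : H.Adj z y
      · -- C4 : x z y w
        exact no_c4 hg h1.symm h2 hwy.symm hxw.symm hxy.1 hzw
      · obtain ⟨-, hB | ⟨n, hzn, hny⟩⟩ := hQ.1 hz hy hzy
        · exact h2 hB
        have hnw : n ≠ w := fun h => hwz (by rw [← h]; exact hzn.symm)
        -- C5 : z x w y n
        refine no_c5 hg h1 hxw hwy hny.symm hzn.symm hzw hzy hxy.1 ?_ (Ne.symm hnw)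
        · intro hh; exact hnxy (by rw [hh]; exact hny)
      · obtain ⟨-, hA | ⟨m, hzm, hmx⟩⟩ := hQ.1 hz hx hzx
        · exact h1 hA
        have hmw : m ≠ w := fun h => hwz (by rw [← h]; exact hzm.symm)
        -- C5 : z m x w y
        refine no_c5 hg hzm hmx hxw hwy h2.symm hzx hzw hmw ?_ hxy.1
        · intro hh; exact hnxy (by rw [← hh]; exact hmx.symm)
      · obtain ⟨-, hA | ⟨m, hzm, hmx⟩⟩ := hQ.1 hz hx hzx
        · exact h1 hA
        obtain ⟨-, hB | ⟨n, hzn, hny⟩⟩ := hQ.1 hz hy hzy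
        · exact h2 hB
        have hmw : m ≠ w := fun h => hwz (by rw [← h]; exact hzm.symm)
        have hnw : n ≠ w := fun h => hwz (by rw [← h]; exact hzn.symm)
        rcases eq_or_ne m n with rfl | hmn
        · -- C4 : m x w y
          exact no_c4 hg hmx hxw hwy hny.symm hmw hxy.1
        · -- C6 : z m x w y n
          refine no_c6 hg hzm hmx hxw hwy hny.symm hzn.symm hzx hzw hzy hmw ?_ hmn hxy.1
            ?_ hnw.symm
          · intro hh; exact hnxy (by rw [← hh]; exact hmx.symm)
          · intro hh; exact hnxy (by rw [hh]; exact hny)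
  obtain ⟨c, hc⟩ := hsub
  exact ⟨c, (hQ.2 (Nb H c) (nbClique hg c) hc).symm⟩

/-- If `c` has two distinct neighbours then `Nb c` is a maximal clique of the square. -/
lemma nb_maxclique (hg : 7 ≤ H.girth) {c x y : V} (hcx : H.Adj c x) (hcy : H.Adj c y)
    (hxy : x ≠ y) : IsMaxClique (graphSq H) (Nb H c) := by
  refine ⟨nbClique hg c, fun R hR hsub => ?_⟩
  refine Set.Subset.antisymm (fun u hu => ?_) hsub
  rcases eq_or_ne u c with rfl | huc
  · exact self_mem_nb _
  by_cases hcu : H.Adj c u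
  · exact adj_mem_nb hcu
  exfalso
  obtain ⟨-, hA | ⟨w, huw, hwc⟩⟩ := hR hu (hsub (self_mem_nb c)) huc
  · exact hcu hA.symm
  obtain ⟨t, hct, htw⟩ : ∃ t, H.Adj c t ∧ t ≠ w := by
    rcases eq_or_ne x w with rfl | h
    · exact ⟨y, hcy, fun h' => hxy (h' ▸ rfl)⟩
    · exact ⟨x, hcx, h⟩
  have hut : u ≠ t := fun h => hcu (by rw [h]; exact hct)
  obtain ⟨-, hB | ⟨s, hus, hst⟩⟩ := hR hu (hsub (adj_mem_nb hct)) hut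
  · -- C4 : u w c t
    exact no_c4 hg huw hwc hct hB.symm huc (Ne.symm htw)
  have hsw : s ≠ w := by
    intro h; subst h
    exact no_triangle hg hst hct.symm hwc.symm
  have hsc : s ≠ c := fun h => hcu (by rw [← h]; exact hus.symm)
  -- C5 : u w c t s
  exact no_c5 hg huw hwc hct hst.symm hus.symm huc hut htw.symm hsw.symm (Ne.symm hsc)

/-- Two adjacent vertices have distinct closed neighbourhoods. -/
lemma nb_ne (hg : 7 ≤ H.girth) (hconn : H.Connected) (hnc : graphSq H ≠ ⊤)
    {x y : V} (hxy : H.Adj x y) : Nb H x ≠ Nb H y := by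
  intro heq
  have hx1 : ∀ z, H.Adj x z → z = y := by
    intro z hz
    by_contra hzy
    have hzNb : z ∈ Nb H y := by rw [← heq]; exact adj_mem_nb hz
    rcases hzNb with h | h
    · exact hzy h
    · exact no_triangle hg hz h.symm hxy.symm
  have hy1 : ∀ z, H.Adj y z → z = x := by
    intro z hz
    by_contra hzx
    have hzNb : z ∈ Nb H x := by rw [heq]; exact adj_mem_nb hz
    rcases hzNb with h | h
    · exact hzx h
    · exact no_triangle hg hz h.symm hxy
  have hall : ∀ v, v ∈ ({x, y} : Set V) := by
    refine reachClosure hconn (S := {x, y}) ?_ (Set.mem_insert x _)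
    rintro z (rfl | rfl) w hw
    · exact Or.inr (hx1 w hw)
    · exact Or.inl (hy1 w hw)
  obtain ⟨a, b, hab, hnadj⟩ := far_pair hnc
  have hadjab : H.Adj a b := by
    rcases hall a with rfl | rfl <;> rcases hall b with rfl | rfl
    · exact absurd rfl hab
    · exact hxy
    · exact hxy.symm
    · exact absurd rfl hab
  exact hnadj ⟨hab, Or.inl hadjab⟩

/-- Endpoints of a forced edge are centers of maximal cliques, and forced edges are H-edges. -/
lemma forced_centers (hg : 7 ≤ H.girth) (hconn : H.Connected) (hnc : graphSq H ≠ ⊤)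
    {u v : V} (hf : Forced (graphSq H) u v) :
    IsMaxClique (graphSq H) (Nb H u) ∧ IsMaxClique (graphSq H) (Nb H v) ∧ H.Adj u v := by
  obtain ⟨hadj, Q₁, Q₂, hne, hm1, hm2, hu1, hv1, hu2, hv2⟩ := hf
  obtain ⟨c₁, rfl⟩ := maxclique_eq_nb hg hconn hnc hm1
  obtain ⟨c₂, rfl⟩ := maxclique_eq_nb hg hconn hnc hm2
  have hc : c₁ ≠ c₂ := fun h => hne (by rw [h])
  have huv : u ≠ v := hadj.ne
  have key : (u = c₁ ∧ v = c₂) ∨ (u = c₂ ∧ v = c₁) := by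
    rcases hu1 with hu1 | hu1'
    · -- u = c₁
      refine Or.inl ⟨hu1, ?_⟩
      rcases hv2 with h | hv2'
      · exact h
      rcases hv1 with h | hv1'
      · exact absurd (h.trans hu1.symm).symm huv
      · exfalso
        rcases hu2 with h2 | hu2'
        · exact hc (hu1.symm.trans h2)
        · -- triangle c₁ v c₂ : edges c₁–v, v–c₂, c₂–c₁
          exact no_triangle hg hv1' hv2'.symm (by rw [← hu1]; exact hu2')
    · rcases hu2 with hu2 | hu2'
      · -- u = c₂
        refine Or.inr ⟨hu2, ?_⟩
        rcases hv1 with h | hv1'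
        · exact h
        rcases hv2 with h | hv2'
        · exact absurd (h.trans hu2.symm).symm huv
        · exact (no_triangle hg hv2' hv1'.symm (by rw [← hu2]; exact hu1')).elim
      · -- u adjacent to both centers
        exfalso
        rcases hv1 with h | hv1'
        · -- v = c₁ : triangle u c₁ c₂? edges: c₁–u (hu1'), u–c₂ (hu2'.symm), c₂–c₁ (from hv2)
          rcases hv2 with h2 | hv2'
          · exact hc (h.symm.trans h2)
          · exact no_triangle hg hu1' hu2'.symm (by rw [← h]; exact hv2')
        · rcases hv2 with h2 | hv2'
          · -- v = c₂ : triangle u c₁ v? edges u–c₁? triangle: c₁–u (hu1'), u–c₂ (hu2'.symm), c₂–c₁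
            exact no_triangle hg hu1' hu2'.symm (by rw [← h2]; exact hv1'.symm)
          · exact no_c4 hg hu1' hu2'.symm hv2' hv1'.symm hc huv
  rcases key with ⟨h1, h2⟩ | ⟨h1, h2⟩
  · subst h1; subst h2
    exact ⟨hm1, hm2, (hv1.resolve_left (Ne.symm huv))⟩
  · subst h1; subst h2
    exact ⟨hm2, hm1, (hv2.resolve_left (Ne.symm huv))⟩

/-- An H-edge between two centers of maximal cliques is forced. -/
lemma forced_of (hg : 7 ≤ H.girth) (hconn : H.Connected) (hnc : graphSq H ≠ ⊤)
    {u v : V} (huv : H.Adj u v) (hu : IsMaxClique (graphSq H) (Nb H u))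
    (hv : IsMaxClique (graphSq H) (Nb H v)) : Forced (graphSq H) u v :=
  ⟨⟨huv.ne, Or.inl huv⟩, Nb H u, Nb H v, nb_ne hg hconn hnc huv, hu, hv,
    self_mem_nb u, adj_mem_nb huv, adj_mem_nb huv.symm, self_mem_nb v⟩

end Aux

theorem stmt4 (H : SimpleGraph V)
    (hconn : H.Connected) (hgirth : 7 ≤ H.girth) (hnc : graphSq H ≠ ⊤)
    (Q : Set V) (hQ : IsMaxClique (graphSq H) Q) :
    IsStarOn (forcedSubgraph (graphSq H)) (Q ∩ (forcedSubgraph (graphSq H)).support) := by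
  obtain ⟨c, rfl⟩ := maxclique_eq_nb hgirth hconn hnc hQ
  obtain ⟨d, hcd, e, hde, hec⟩ : ∃ d, H.Adj c d ∧ ∃ e, H.Adj d e ∧ e ≠ c := by
    by_contra h
    push_neg at h
    obtain ⟨a, b, hab, hnadj⟩ := far_pair hnc
    have hall : ∀ v, v ∈ Nb H c := by
      refine reachClosure hconn (S := Nb H c) ?_ (self_mem_nb c)
      rintro z (rfl | hz) w hw
      · exact adj_mem_nb hw
      · rw [h z hz w hw]; exact self_mem_nb _
    exact hnadj (nbClique hgirth c (hall a) (hall b) hab)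
  have hNbd : IsMaxClique (graphSq H) (Nb H d) :=
    nb_maxclique hgirth hcd.symm hde (Ne.symm hec)
  have hfcd : Forced (graphSq H) c d := forced_of hgirth hconn hnc hcd hQ hNbd
  refine ⟨⟨c, ⟨self_mem_nb c, (mem_support _).mpr ⟨d, hfcd⟩⟩,
      d, ⟨adj_mem_nb hcd, (mem_support _).mpr ⟨c, SimpleGraph.Adj.symm (G := forcedSubgraph (graphSq H)) hfcd⟩⟩, hcd.ne⟩,
    c, ⟨self_mem_nb c, (mem_support _).mpr ⟨d, hfcd⟩⟩, ?_, ?_⟩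
  · rintro x ⟨hxQ, hxs⟩ hxc
    have hcx : H.Adj c x := hxQ.resolve_left hxc
    obtain ⟨w, hw⟩ := (mem_support _).mp hxs
    exact forced_of hgirth hconn hnc hcx hQ (forced_centers hgirth hconn hnc hw).1
  · rintro x ⟨hxQ, -⟩ y ⟨hyQ, -⟩ hxc hyc hxy hf
    have hcx : H.Adj c x := hxQ.resolve_left hxc
    have hcy : H.Adj c y := hyQ.resolve_left hyc
    have hadj : H.Adj x y := (forced_centers hgirth hconn hnc hf).2.2
    exact no_triangle hgirth hadj hcy.symm hcx
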